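/- Let a, b, c, ȧ, ḃ be polynomials over ℂ satisfying 2·a·ḃ − ȧ·b = λ·(2·a·c′ − a′·c). If β ∈ ℂ is a simple root of b (b(β) = 0, b′(β) ≠ 0) with a(β) ≠ 0, then ḃ(β)/b′(β) = −β·(a′(β)·c(β) − 2·a(β)·c′(β))/(2·a(β)·b′(β)). -/

import Mathlib

open Polynomial

theorem stmt10 (a b c adot bdot : Polynomial ℂ)
    (h : 2 * a * bdot - adot * b = X * (2 * a * derivative c - derivative a * c))
    (β : ℂ) (hroot : b.eval β = 0) (hsimple : (derivative b).eval β ≠ 0)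
    (ha : a.eval β ≠ 0) :
    bdot.eval β / (derivative b).eval β
      = -β * ((derivative a).eval β * c.eval β - 2 * a.eval β * (derivative c).eval β)
          / (2 * a.eval β * (derivative b).eval β) := by
  have h' := congrArg (eval β) h
  simp only [eval_mul, eval_sub, eval_add, eval_ofNat, eval_X, hroot] at h'
  field_simp
  linear_combination h'
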